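/- Partition {1, …, k} into the maximal intervals of consecutive integers on which the sequence b is constant. Then there exist unique positive real constants C_{[p,q]}, one for each maximal constant interval [p, q] of b satisfying a_p > b_p and b_q > a_{q+1}, with the following property: a vector z = (z₁, …, z_k) ∈ ℂ^k belongs to Ã_{k+1}(a, b) if and only if for every maximal constant interval [p, q] of b, either a_p > b_p and b_q > a_{q+1} and Σ_{i=p}^{q} |z_i|² = C_{[p,q]}, or else (i.e., if a_p = b_p or b_q = a_{q+1}) z_i = 0 for all p ≤ i ≤ q. In particular, Ã_{k+1}(a, b) is a product of odd-dimensional spheres. -/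

import Mathlib

open Polynomial

/-- The `(k+1) × (k+1)` Hermitian "arrow" matrix whose upper-left `k × k` block is
`diag(b 1, …, b k)`, whose `(i, k+1)` entry is `conj (z i)` and `(k+1, i)` entry is `z i`
for `1 ≤ i ≤ k` (1-based indexing of the sequences), and whose `(k+1, k+1)` entry is `w`. -/
def Zarrow (k : ℕ) (b : ℕ → ℝ) (w : ℝ) (z : ℕ → ℂ) :
    Matrix (Fin (k + 1)) (Fin (k + 1)) ℂ :=
  Matrix.of fun i j =>
    if (i : ℕ) < k then
      if (j : ℕ) < k then (if i = j then (b ((i : ℕ) + 1) : ℂ) else 0)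
      else (starRingEnd ℂ) (z ((i : ℕ) + 1))
    else
      if (j : ℕ) < k then z ((j : ℕ) + 1)
      else (w : ℂ)

/-- The matrix `Z_{(a,b)}(z)`: the arrow matrix with corner entry
`z_{k+1} = Σ_{i=1}^{k+1} aᵢ − Σ_{i=1}^{k} bᵢ`. -/
def Zab (k : ℕ) (a b : ℕ → ℝ) (z : ℕ → ℂ) : Matrix (Fin (k + 1)) (Fin (k + 1)) ℂ :=
  Zarrow k b ((∑ i ∈ Finset.Icc 1 (k + 1), a i) - ∑ i ∈ Finset.Icc 1 k, b i) z

/-- `Ã_{k+1}(a, b)`: those `z` (with relevant coordinates `z 1, …, z k`) for which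
`Z_{(a,b)}(z)` has characteristic polynomial `∏_{i=1}^{k+1}(X − aᵢ)`. -/
def Atilde (k : ℕ) (a b : ℕ → ℝ) : Set (ℕ → ℂ) :=
  {z | (Zab k a b z).charpoly = ∏ i ∈ Finset.Icc 1 (k + 1), (X - C (a i : ℂ))}

/-- `[p, q] ⊆ {1, …, k}` is a maximal interval of consecutive indices on which the
(1-based) sequence `b` is constant. -/
def IsMaxConstInterval (k : ℕ) (b : ℕ → ℝ) (p q : ℕ) : Prop :=
  1 ≤ p ∧ p ≤ q ∧ q ≤ k ∧ (∀ m, p ≤ m → m ≤ q → b m = b p) ∧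
    (p = 1 ∨ b (p - 1) ≠ b p) ∧ (q = k ∨ b q ≠ b (q + 1))

open Matrix Finset

noncomputable section

abbrev KK := RatFunc ℂ
abbrev ff : ℂ[X] →+* KK := algebraMap ℂ[X] KK

lemma ff_inj : Function.Injective ff := IsFractionRing.injective ℂ[X] KK

lemma charpoly_zarrow_fin (k : ℕ) (b : ℕ → ℝ) (w : ℝ) (z : ℕ → ℂ) :
    (Zarrow k b w z).charpoly =
      (X - C (w:ℂ)) * ∏ i : Fin k, (X - C ((b ((i:ℕ)+1)) : ℂ))
      - ∑ i : Fin k, C ((Complex.normSq (z ((i:ℕ)+1)) : ℂ)) *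
          ∏ j ∈ Finset.univ \ {i}, (X - C ((b ((j:ℕ)+1)) : ℂ)) := by
  apply ff_inj
  rw [Matrix.charpoly]
  rw [RingHom.map_det]
  set e : Fin k ⊕ Fin 1 ≃ Fin (k+1) := finSumFinEquiv
  rw [← Matrix.det_submatrix_equiv_self e]
  set d : Fin k → KK := fun i => ff (X - C ((b ((i:ℕ)+1)) : ℂ)) with hd
  have hdne : ∀ i, d i ≠ 0 := by
    intro i
    simp only [hd, Ne, map_eq_zero_iff ff ff_inj]
    exact X_sub_C_ne_zero _
  set A : Matrix (Fin k) (Fin k) KK := Matrix.diagonal d with hA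
  set B : Matrix (Fin k) (Fin 1) KK :=
    Matrix.of (fun i _ => - ff (C ((starRingEnd ℂ) (z ((i:ℕ)+1))))) with hB
  set Cv : Matrix (Fin 1) (Fin k) KK :=
    Matrix.of (fun _ j => - ff (C (z ((j:ℕ)+1)))) with hCv
  set D : Matrix (Fin 1) (Fin 1) KK :=
    Matrix.of (fun _ _ => ff (X - C (w:ℂ))) with hD
  have hsub : ((ff.mapMatrix) (Zarrow k b w z).charmatrix).submatrix e e
      = Matrix.fromBlocks A B Cv D := by
    ext i j
    cases i with
    | inl i =>
      cases j with
      | inl j =>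
        by_cases hij : i = j
        · subst hij
          simp [e, Matrix.charmatrix_apply_eq, Zarrow, A, d, Fin.castAdd]
        · have : (finSumFinEquiv (Sum.inl i) : Fin (k+1)) ≠ finSumFinEquiv (Sum.inl j) := by
            simp [hij]
          simp only [Matrix.submatrix_apply, RingHom.mapMatrix_apply, Matrix.map_apply]
          rw [Matrix.charmatrix_apply_ne _ _ _ this]
          have h1 : ((finSumFinEquiv (Sum.inl i) : Fin (k+1)) : ℕ) = (i:ℕ) := by simp
          have h2 : ((finSumFinEquiv (Sum.inl j) : Fin (k+1)) : ℕ) = (j:ℕ) := by simp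
          have hz : Zarrow k b w z (finSumFinEquiv (Sum.inl i)) (finSumFinEquiv (Sum.inl j)) = 0 := by
            simp only [Zarrow, Matrix.of_apply, h1, h2, i.isLt, j.isLt, if_true, if_neg this]
          rw [hz]
          simp [hA, Matrix.diagonal_apply_ne _ hij]
      | inr j =>
        have hne : (finSumFinEquiv (Sum.inl i) : Fin (k+1)) ≠ finSumFinEquiv (Sum.inr j) := by
          simp [Fin.ext_iff]; omega
        simp only [Matrix.submatrix_apply, RingHom.mapMatrix_apply, Matrix.map_apply]
        rw [Matrix.charmatrix_apply_ne _ _ _ hne]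
        have h1 : ((finSumFinEquiv (Sum.inl i) : Fin (k+1)) : ℕ) = (i:ℕ) := by simp
        have h2 : ((finSumFinEquiv (Sum.inr j) : Fin (k+1)) : ℕ) = k + (j:ℕ) := by simp
        simp [Zarrow, h1, h2, i.isLt, B]
    | inr i =>
      cases j with
      | inl j =>
        have hne : (finSumFinEquiv (Sum.inr i) : Fin (k+1)) ≠ finSumFinEquiv (Sum.inl j) := by
          simp [Fin.ext_iff]; omega
        simp only [Matrix.submatrix_apply, RingHom.mapMatrix_apply, Matrix.map_apply]
        rw [Matrix.charmatrix_apply_ne _ _ _ hne]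
        have h1 : ((finSumFinEquiv (Sum.inr i) : Fin (k+1)) : ℕ) = k + (i:ℕ) := by simp
        have h2 : ((finSumFinEquiv (Sum.inl j) : Fin (k+1)) : ℕ) = (j:ℕ) := by simp
        simp [Zarrow, h1, h2, j.isLt, Cv]
        
      | inr j =>
        have heq : (finSumFinEquiv (Sum.inr i) : Fin (k+1)) = finSumFinEquiv (Sum.inr j) := by
          apply Fin.ext; simp
        simp only [Matrix.submatrix_apply, RingHom.mapMatrix_apply, Matrix.map_apply]
        rw [heq, Matrix.charmatrix_apply_eq]
        have h2 : ((finSumFinEquiv (Sum.inr j) : Fin (k+1)) : ℕ) = k + (j:ℕ) := by simp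
        simp [Zarrow, h2, D, map_sub]
  rw [hsub]
  have hAdet : IsUnit A.det := by
    rw [hA, Matrix.det_diagonal]
    exact (Finset.prod_ne_zero_iff.2 fun i _ => hdne i).isUnit
  letI : Invertible A := Matrix.invertibleOfIsUnitDet A hAdet
  rw [Matrix.det_fromBlocks₁₁]
  have hinv : (⅟A : Matrix (Fin k) (Fin k) KK) = Matrix.diagonal (fun i => (d i)⁻¹) := by
    apply invOf_eq_right_inv
    have h1 : (fun i => d i * (d i)⁻¹) = fun _ : Fin k => (1:KK) :=
      funext fun i => mul_inv_cancel₀ (hdne i)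
    rw [hA, Matrix.diagonal_mul_diagonal, h1, Matrix.diagonal_one]
  rw [hinv]
  have hDCAB : (D - Cv * Matrix.diagonal (fun i => (d i)⁻¹) * B).det
      = ff (X - C (w:ℂ)) - ∑ i : Fin k, (d i)⁻¹ * ff (C ((Complex.normSq (z ((i:ℕ)+1)) : ℂ))) := by
    rw [Matrix.det_fin_one]
    simp only [Matrix.sub_apply]
    congr 1
    rw [Matrix.mul_apply]
    refine Finset.sum_congr rfl fun x _ => ?_
    rw [Matrix.mul_diagonal]
    have h3 : ff (C (z ((x:ℕ)+1))) * ff (C ((starRingEnd ℂ) (z ((x:ℕ)+1))))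
        = ff (C ((Complex.normSq (z ((x:ℕ)+1)) : ℂ))) := by
      rw [← _root_.map_mul, ← _root_.map_mul, Complex.mul_conj]
    calc (-ff (C (z ((x:ℕ)+1)))) * (d x)⁻¹ * (-ff (C ((starRingEnd ℂ) (z ((x:ℕ)+1)))))
        = (d x)⁻¹ * (ff (C (z ((x:ℕ)+1))) * ff (C ((starRingEnd ℂ) (z ((x:ℕ)+1))))) := by ring
      _ = _ := by rw [h3]
  rw [hDCAB, hA, Matrix.det_diagonal]
  have hcancel : ∀ i : Fin k, (∏ j, d j) * (d i)⁻¹ = ∏ j ∈ Finset.univ \ {i}, d j := by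
    intro i
    rw [← Finset.erase_eq, ← Finset.mul_prod_erase Finset.univ d (Finset.mem_univ i),
      mul_comm (d i), mul_assoc, mul_inv_cancel₀ (hdne i), mul_one]
  have hRHS : ff ((X - C (w:ℂ)) * ∏ i : Fin k, (X - C ((b ((i:ℕ)+1)) : ℂ))
      - ∑ i : Fin k, C ((Complex.normSq (z ((i:ℕ)+1)) : ℂ)) *
          ∏ j ∈ Finset.univ \ {i}, (X - C ((b ((j:ℕ)+1)) : ℂ)))
      = ff (X - C (w:ℂ)) * (∏ i, d i)
        - ∑ i : Fin k, ff (C ((Complex.normSq (z ((i:ℕ)+1)) : ℂ))) *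
            ∏ j ∈ Finset.univ \ {i}, d j := by
    rw [_root_.map_sub, _root_.map_mul, map_prod, map_sum]
    simp only [_root_.map_mul, map_prod, hd]
  rw [hRHS]
  rw [mul_sub, Finset.mul_sum]
  congr 1
  · exact mul_comm _ _
  · refine Finset.sum_congr rfl fun i _ => ?_
    calc (∏ j, d j) * ((d i)⁻¹ * ff (C ((Complex.normSq (z ((i:ℕ)+1)) : ℂ))))
        = ((∏ j, d j) * (d i)⁻¹) * ff (C ((Complex.normSq (z ((i:ℕ)+1)) : ℂ))) := by ring
      _ = (∏ j ∈ Finset.univ \ {i}, d j) * ff (C ((Complex.normSq (z ((i:ℕ)+1)) : ℂ))) := by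
            rw [hcancel i]
      _ = _ := mul_comm _ _


@[to_additive]
lemma finprod_reindex {M : Type*} [CommMonoid M] (k : ℕ) (f : ℕ → M) :
    ∏ i : Fin k, f ((i:ℕ)+1) = ∏ i ∈ Finset.Icc 1 k, f i := by
  refine Finset.prod_bij (fun (i : Fin k) _ => (i:ℕ)+1) ?_ ?_ ?_ ?_
  · intro i _; simp [Finset.mem_Icc]
  · intro i _ j _ h
    have h' : (i:ℕ)+1 = (j:ℕ)+1 := h
    exact Fin.ext (by omega)
  · intro m hm
    simp only [Finset.mem_Icc] at hm
    exact ⟨⟨m-1, by omega⟩, Finset.mem_univ _, by simp; omega⟩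
  · intro i _; rfl

lemma finprod_reindex_sdiff {M : Type*} [CommMonoid M] (k : ℕ) (i₀ : Fin k) (f : ℕ → M) :
    ∏ j ∈ Finset.univ \ {i₀}, f ((j:ℕ)+1)
      = ∏ j ∈ Finset.Icc 1 k \ {(i₀:ℕ)+1}, f j := by
  refine Finset.prod_bij (fun (j : Fin k) _ => (j:ℕ)+1) ?_ ?_ ?_ ?_
  · intro j hj
    simp only [Finset.mem_sdiff, Finset.mem_singleton, Finset.mem_univ, true_and] at hj
    simp only [Finset.mem_sdiff, Finset.mem_Icc, Finset.mem_singleton]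
    refine ⟨⟨by omega, by omega⟩, ?_⟩
    intro h; exact hj (Fin.ext (by omega))
  · intro i _ j _ h
    have h' : (i:ℕ)+1 = (j:ℕ)+1 := h
    exact Fin.ext (by omega)
  · intro m hm
    simp only [Finset.mem_sdiff, Finset.mem_Icc, Finset.mem_singleton] at hm
    refine ⟨⟨m-1, by omega⟩, ?_, by simp; omega⟩
    simp only [Finset.mem_sdiff, Finset.mem_univ, Finset.mem_singleton, true_and]
    intro h
    have := congrArg Fin.val h
    simp at this; omega
  · intro j _; rfl

lemma charpoly_zarrow (k : ℕ) (b : ℕ → ℝ) (w : ℝ) (z : ℕ → ℂ) :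
    (Zarrow k b w z).charpoly =
      (X - C (w:ℂ)) * ∏ i ∈ Finset.Icc 1 k, (X - C ((b i) : ℂ))
      - ∑ i ∈ Finset.Icc 1 k, C ((Complex.normSq (z i) : ℂ)) *
          ∏ j ∈ Finset.Icc 1 k \ {i}, (X - C ((b j) : ℂ)) := by
  rw [charpoly_zarrow_fin]
  congr 1
  · rw [finprod_reindex k (fun i => (X - C ((b i) : ℂ)))]
  · have h1 : ∀ i : Fin k, C ((Complex.normSq (z ((i:ℕ)+1)) : ℂ)) *
        ∏ j ∈ Finset.univ \ {i}, (X - C ((b ((j:ℕ)+1)) : ℂ))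
        = C ((Complex.normSq (z ((i:ℕ)+1)) : ℂ)) *
          ∏ j ∈ Finset.Icc 1 k \ {(i:ℕ)+1}, (X - C ((b j) : ℂ)) := by
      intro i
      rw [finprod_reindex_sdiff k i (fun j => (X - C ((b j) : ℂ)))]
    rw [Finset.sum_congr rfl (fun i _ => h1 i)]
    exact finsum_reindex k (fun m => C ((Complex.normSq (z m) : ℂ)) *
      ∏ j ∈ Finset.Icc 1 k \ {m}, (X - C ((b j) : ℂ)))

section Comb

variable {k : ℕ} {a b : ℕ → ℝ}

lemma bmono (hab : ∀ i, 1 ≤ i → i ≤ k → b i ≤ a i ∧ a (i + 1) ≤ b i) :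
    ∀ j, j ≤ k → ∀ i, 1 ≤ i → i ≤ j → b j ≤ b i := by
  intro j
  induction j with
  | zero => intro _ i h1 h2; omega
  | succ n ih =>
    intro hn i h1 h2
    rcases Nat.lt_or_ge i (n+1) with h | h
    · have hbn : b n ≤ b i := ih (by omega) i h1 (by omega)
      have h2' := (hab (n+1) (by omega) hn).1
      have h3 := (hab n (by omega) (by omega)).2
      linarith
    · have : i = n + 1 := by omega
      subst this; exact le_refl _

lemma amono (hab : ∀ i, 1 ≤ i → i ≤ k → b i ≤ a i ∧ a (i + 1) ≤ b i) :
    ∀ j, j ≤ k + 1 → ∀ i, 1 ≤ i → i ≤ j → a j ≤ a i := by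
  intro j
  induction j with
  | zero => intro _ i h1 h2; omega
  | succ n ih =>
    intro hn i h1 h2
    rcases Nat.lt_or_ge i (n+1) with h | h
    · have han : a n ≤ a i := ih (by omega) i h1 (by omega)
      have h2' := (hab n (by omega) (by omega)).1
      have h3 := (hab n (by omega) (by omega)).2
      linarith
    · have : i = n + 1 := by omega
      subst this; exact le_refl _

lemma interval_a_mid (hab : ∀ i, 1 ≤ i → i ≤ k → b i ≤ a i ∧ a (i + 1) ≤ b i)
    (hI : IsMaxConstInterval k b p q) : ∀ i, p < i → i ≤ q → a i = b p := by
  obtain ⟨hp1, hpq, hqk, hconst, _, _⟩ := hI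
  intro i hpi hiq
  have h1 := (hab i (by omega) (by omega)).1
  have h2 := (hab (i-1) (by omega) (by omega)).2
  have h3 : i - 1 + 1 = i := by omega
  rw [h3] at h2
  have hbi : b i = b p := hconst i (by omega) hiq
  have hbim : b (i-1) = b p := hconst (i-1) (by omega) (by omega)
  linarith [h1, h2, hbi.le, hbim.le]

lemma interval_b_lt (hab : ∀ i, 1 ≤ i → i ≤ k → b i ≤ a i ∧ a (i + 1) ≤ b i)
    (hI : IsMaxConstInterval k b p q) : ∀ j, 1 ≤ j → j < p → b p < b j := by
  obtain ⟨hp1, hpq, hqk, hconst, hmaxl, _⟩ := hI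
  intro j hj1 hjp
  have hp2 : 2 ≤ p := by omega
  have hne : b (p-1) ≠ b p := by
    rcases hmaxl with h | h
    · omega
    · exact h
  have h1 : b (p-1) ≤ b j := bmono hab (p-1) (by omega) j hj1 (by omega)
  have h2 : b p ≤ b (p-1) := by
    have := bmono hab p (by omega) (p-1) (by omega) (by omega)
    exact this
  have : b p < b (p-1) := lt_of_le_of_ne h2 (fun h => hne h.symm)
  linarith

lemma interval_b_gt (hab : ∀ i, 1 ≤ i → i ≤ k → b i ≤ a i ∧ a (i + 1) ≤ b i)
    (hI : IsMaxConstInterval k b p q) : ∀ j, q < j → j ≤ k → b j < b p := by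
  obtain ⟨hp1, hpq, hqk, hconst, _, hmaxr⟩ := hI
  intro j hqj hjk
  have hqk' : q < k := by omega
  have hne : b q ≠ b (q+1) := by
    rcases hmaxr with h | h
    · omega
    · exact h
  have h1 : b j ≤ b (q+1) := bmono hab j hjk (q+1) (by omega) (by omega)
  have h2 : b (q+1) ≤ b q := bmono hab (q+1) (by omega) q (by omega) (by omega)
  have h3 : b (q+1) < b q := lt_of_le_of_ne h2 (fun h => hne h.symm)
  have h4 : b q = b p := hconst q hpq (le_refl _)
  linarith

end Comb

section Starts

open scoped Classical in
noncomputable def Starts (k : ℕ) (b : ℕ → ℝ) : Finset ℕ :=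
  (Finset.Icc 1 k).filter (fun p => p = 1 ∨ b (p-1) ≠ b p)

open scoped Classical in
noncomputable def iend (k : ℕ) (b : ℕ → ℝ) (p : ℕ) : ℕ :=
  Nat.findGreatest (fun q => p ≤ q ∧ ∀ m, p ≤ m → m ≤ q → b m = b p) k

open scoped Classical in
noncomputable def stt (k : ℕ) (b : ℕ → ℝ) (i : ℕ) : ℕ :=
  Nat.findGreatest (fun p => p ∈ Starts k b ∧ p ≤ i) i

variable {k : ℕ} {b : ℕ → ℝ}

lemma mem_starts_iff {p : ℕ} : p ∈ Starts k b ↔ (1 ≤ p ∧ p ≤ k) ∧ (p = 1 ∨ b (p-1) ≠ b p) := by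
  classical
  simp [Starts, Finset.mem_filter, Finset.mem_Icc]

lemma one_mem_starts (hk : 1 ≤ k) : 1 ∈ Starts k b :=
  mem_starts_iff.2 ⟨⟨le_refl _, hk⟩, Or.inl rfl⟩

lemma iend_ge {p : ℕ} (hp : p ∈ Starts k b) : p ≤ iend k b p := by
  classical
  have hpk := (mem_starts_iff.1 hp).1.2
  exact Nat.le_findGreatest hpk ⟨le_refl _, fun m h1 h2 => by have : m = p := by omega
                                                              rw [this]⟩

lemma iend_le (p : ℕ) : iend k b p ≤ k := Nat.findGreatest_le k

lemma iend_const {p : ℕ} (hp : p ∈ Starts k b) :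
    ∀ m, p ≤ m → m ≤ iend k b p → b m = b p := by
  classical
  have hpk := (mem_starts_iff.1 hp).1.2
  have hspec := Nat.findGreatest_spec (P := fun q => p ≤ q ∧ ∀ m, p ≤ m → m ≤ q → b m = b p)
    hpk ⟨le_refl _, fun m h1 h2 => by have : m = p := by omega
                                      rw [this]⟩
  exact hspec.2

lemma iend_max {p q : ℕ} (hp : p ∈ Starts k b) (hq : iend k b p < q) (hqk : q ≤ k) :
    ¬(p ≤ q ∧ ∀ m, p ≤ m → m ≤ q → b m = b p) := by
  classical
  exact Nat.findGreatest_is_greatest hq hqk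

lemma starts_isMaxConstInterval (hk : 1 ≤ k) {p : ℕ} (hp : p ∈ Starts k b) :
    IsMaxConstInterval k b p (iend k b p) := by
  obtain ⟨⟨hp1, hpk⟩, hst⟩ := mem_starts_iff.1 hp
  refine ⟨hp1, iend_ge hp, iend_le p, iend_const hp, hst, ?_⟩
  set q := iend k b p with hq
  by_cases hqk : q = k
  · exact Or.inl hqk
  · right
    intro heq
    have hlt : q < k := lt_of_le_of_ne (iend_le p) hqk
    apply iend_max hp (q := q+1) (by omega) (by omega)
    refine ⟨by have := iend_ge hp; omega, ?_⟩
    intro m h1 h2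
    rcases Nat.lt_or_ge m (q+1) with h | h
    · exact iend_const hp m h1 (by omega)
    · have : m = q + 1 := by omega
      rw [this, ← heq]
      exact iend_const hp q (iend_ge hp) (le_refl _)

lemma interval_start_mem {p q : ℕ} (hI : IsMaxConstInterval k b p q) : p ∈ Starts k b :=
  mem_starts_iff.2 ⟨⟨hI.1, le_trans hI.2.1 hI.2.2.1⟩, hI.2.2.2.2.1⟩

lemma interval_end_eq {p q : ℕ} (hI : IsMaxConstInterval k b p q) : q = iend k b p := by
  obtain ⟨hp1, hpq, hqk, hconst, hml, hmr⟩ := hI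
  have hp : p ∈ Starts k b := interval_start_mem ⟨hp1, hpq, hqk, hconst, hml, hmr⟩
  have hqle : q ≤ iend k b p := by
    classical
    exact Nat.le_findGreatest hqk ⟨hpq, hconst⟩
  rcases Nat.lt_or_ge q (iend k b p) with h | h
  · exfalso
    have hqk' : q < k := lt_of_lt_of_le h (iend_le p)
    have hne : b q ≠ b (q+1) := by
      rcases hmr with h' | h'
      · omega
      · exact h'
    apply hne
    have h1 : b q = b p := hconst q hpq (le_refl _)
    have h2 : b (q+1) = b p := iend_const hp (q+1) (by omega) (by omega)
    rw [h1, h2]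
  · omega

lemma stt_mem {i : ℕ} (hk : 1 ≤ k) (h1 : 1 ≤ i) (hik : i ≤ k) :
    stt k b i ∈ Starts k b ∧ 1 ≤ stt k b i ∧ stt k b i ≤ i := by
  classical
  have hbase : 1 ∈ Starts k b ∧ 1 ≤ i := ⟨one_mem_starts hk, h1⟩
  have hge : 1 ≤ stt k b i := Nat.le_findGreatest h1 hbase
  have hspec := Nat.findGreatest_spec (P := fun p => p ∈ Starts k b ∧ p ≤ i) h1 hbase
  exact ⟨hspec.1, hge, hspec.2⟩

lemma stt_no_start_between {i s : ℕ} (hs : s ∈ Starts k b) (h1 : stt k b i < s) (h2 : s ≤ i) :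
    False := by
  classical
  exact Nat.findGreatest_is_greatest h1 h2 ⟨hs, h2⟩

lemma stt_const {i : ℕ} (hk : 1 ≤ k) (h1 : 1 ≤ i) (hik : i ≤ k) :
    ∀ m, stt k b i ≤ m → m ≤ i → b m = b (stt k b i) := by
  intro m
  induction m with
  | zero =>
    intro h _
    have := (stt_mem (b:=b) hk h1 hik).2.1
    omega
  | succ n ih =>
    intro hsm hmi
    rcases Nat.lt_or_ge n (stt k b i) with h | h
    · have : n + 1 = stt k b i := by omega
      rw [this]
    · have hbn : b n = b (stt k b i) := ih h (by omega)
      have hnot : (n+1) ∉ Starts k b := by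
        intro hmem
        exact stt_no_start_between hmem (by omega) hmi
      have h1' : ¬(n + 1 = 1 ∨ b n ≠ b (n+1)) := by
        intro hor
        apply hnot
        refine mem_starts_iff.2 ⟨⟨by omega, by omega⟩, ?_⟩
        simpa using hor
      push_neg at h1'
      rw [← h1'.2, hbn]

lemma stt_fiber (hk : 1 ≤ k) {p : ℕ} (hp : p ∈ Starts k b) {i : ℕ} (h1 : 1 ≤ i) (hik : i ≤ k) :
    stt k b i = p ↔ (p ≤ i ∧ i ≤ iend k b p) := by
  constructor
  · intro h
    subst h
    refine ⟨(stt_mem hk h1 hik).2.2, ?_⟩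
    classical
    exact Nat.le_findGreatest hik ⟨(stt_mem hk h1 hik).2.2, stt_const hk h1 hik⟩
  · rintro ⟨hpi, hie⟩
    have hsp : p ≤ stt k b i := by
      classical
      exact Nat.le_findGreatest hpi ⟨hp, hpi⟩
    rcases Nat.lt_or_ge p (stt k b i) with h | h
    · exfalso
      have hs := (stt_mem (b:=b) hk h1 hik).1
      have hs2 : 2 ≤ stt k b i := by
        have := (mem_starts_iff.1 hp).1.1
        omega
      have hne : b (stt k b i - 1) ≠ b (stt k b i) := by
        rcases (mem_starts_iff.1 hs).2 with h' | h'
        · omega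
        · exact h'
      apply hne
      have hle : stt k b i ≤ iend k b p := le_trans (stt_mem hk h1 hik).2.2 hie
      have e1 : b (stt k b i - 1) = b p := iend_const hp _ (by omega) (by omega)
      have e2 : b (stt k b i) = b p := iend_const hp _ (by omega) hle
      rw [e1, e2]
    · omega

end Starts

section Poly

noncomputable def wv (k : ℕ) (a b : ℕ → ℝ) : ℝ :=
  (∑ i ∈ Finset.Icc 1 (k+1), a i) - ∑ i ∈ Finset.Icc 1 k, b i

noncomputable def Fpoly (k : ℕ) (a b : ℕ → ℝ) (z : ℕ → ℂ) : ℂ[X] :=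
  (X - C ((wv k a b : ℝ) : ℂ)) * ∏ i ∈ Finset.Icc 1 k, (X - C ((b i) : ℂ))
  - ∑ i ∈ Finset.Icc 1 k, C ((Complex.normSq (z i) : ℂ)) *
      ∏ j ∈ Finset.Icc 1 k \ {i}, (X - C ((b j) : ℂ))

noncomputable def Ppoly (k : ℕ) (a : ℕ → ℝ) : ℂ[X] :=
  ∏ i ∈ Finset.Icc 1 (k+1), (X - C ((a i) : ℂ))

lemma mem_atilde_iff (k : ℕ) (a b : ℕ → ℝ) (z : ℕ → ℂ) :
    z ∈ Atilde k a b ↔ Fpoly k a b z = Ppoly k a := by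
  unfold Atilde Zab
  rw [Set.mem_setOf_eq, charpoly_zarrow]
  rfl

noncomputable def Qp (k : ℕ) (b : ℕ → ℝ) (p q : ℕ) : ℂ[X] :=
  ∏ j ∈ Finset.Icc 1 k \ Finset.Icc p q, (X - C ((b j) : ℂ))

noncomputable def Sig (z : ℕ → ℂ) (p q : ℕ) : ℝ :=
  ∑ i ∈ Finset.Icc p q, Complex.normSq (z i)

noncomputable def Gpoly (k : ℕ) (a b : ℕ → ℝ) (z : ℕ → ℂ) (p q : ℕ) : ℂ[X] :=
  (X - C ((wv k a b : ℝ) : ℂ)) * (X - C ((b p) : ℂ)) * Qp k b p q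
  - C ((Sig z p q : ℝ) : ℂ) * Qp k b p q
  - (X - C ((b p) : ℂ)) *
      ∑ i ∈ Finset.Icc 1 k \ Finset.Icc p q, C ((Complex.normSq (z i) : ℂ)) *
        ∏ j ∈ (Finset.Icc 1 k \ Finset.Icc p q) \ {i}, (X - C ((b j) : ℂ))

noncomputable def Pp' (k : ℕ) (a b : ℕ → ℝ) (p q : ℕ) : ℂ[X] :=
  ∏ i ∈ Finset.Icc 1 (k+1) \ Finset.Icc (p+1) q, (X - C ((a i) : ℂ))

noncomputable def Cconst (k : ℕ) (a b : ℕ → ℝ) (p q : ℕ) : ℝ :=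
  - (∏ i ∈ Finset.Icc 1 (k+1) \ Finset.Icc (p+1) q, (b p - a i))
    / (∏ j ∈ Finset.Icc 1 k \ Finset.Icc p q, (b p - b j))

variable {k : ℕ} {a b : ℕ → ℝ} {z : ℕ → ℂ} {p q : ℕ}

lemma hPfac (hab : ∀ i, 1 ≤ i → i ≤ k → b i ≤ a i ∧ a (i + 1) ≤ b i)
    (hI : IsMaxConstInterval k b p q) :
    Ppoly k a = (X - C ((b p) : ℂ))^(q - p) * Pp' k a b p q := by
  have hsub : Finset.Icc (p+1) q ⊆ Finset.Icc 1 (k+1) := by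
    intro x hx
    simp only [Finset.mem_Icc] at *
    obtain ⟨hp1, hpq, hqk, _, _, _⟩ := hI
    omega
  rw [Ppoly, ← Finset.prod_sdiff hsub]
  have h1 : ∏ i ∈ Finset.Icc (p+1) q, (X - C ((a i) : ℂ)) = (X - C ((b p) : ℂ))^(q - p) := by
    rw [Finset.prod_congr rfl (fun i hi => ?_), Finset.prod_const, Nat.card_Icc]
    · congr 1
      omega
    · simp only [Finset.mem_Icc] at hi
      rw [interval_a_mid hab hI i (by omega) hi.2]
  rw [h1, mul_comm]
  rfl

lemma hFfac (hI : IsMaxConstInterval k b p q) :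
    Fpoly k a b z = (X - C ((b p) : ℂ))^(q - p) * Gpoly k a b z p q := by
  obtain ⟨hp1, hpq, hqk, hconst, _, _⟩ := hI
  have hsub : Finset.Icc p q ⊆ Finset.Icc 1 k := by
    intro x hx; simp only [Finset.mem_Icc] at *; omega
  have hcard : (Finset.Icc p q).card = q - p + 1 := by rw [Nat.card_Icc]; omega
  have hQfull : ∏ i ∈ Finset.Icc 1 k, (X - C ((b i) : ℂ))
      = Qp k b p q * (X - C ((b p) : ℂ))^(q - p + 1) := by
    rw [← Finset.prod_sdiff hsub, Qp]
    congr 1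
    rw [Finset.prod_congr rfl (fun i hi => ?_), Finset.prod_const, hcard]
    simp only [Finset.mem_Icc] at hi
    rw [hconst i hi.1 hi.2]
  have h3 : ∀ i ∈ Finset.Icc p q,
      C ((Complex.normSq (z i) : ℂ)) * ∏ j ∈ Finset.Icc 1 k \ {i}, (X - C ((b j) : ℂ))
      = C ((Complex.normSq (z i) : ℂ)) * ((X - C ((b p) : ℂ))^(q - p) * Qp k b p q) := by
    intro i hi
    simp only [Finset.mem_Icc] at hi
    congr 1
    have hss : Finset.Icc p q \ {i} ⊆ Finset.Icc 1 k \ {i} := by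
      intro x hx
      simp only [Finset.mem_sdiff, Finset.mem_Icc, Finset.mem_singleton] at *
      omega
    rw [← Finset.prod_sdiff hss]
    have hset : (Finset.Icc 1 k \ {i}) \ (Finset.Icc p q \ {i}) = Finset.Icc 1 k \ Finset.Icc p q := by
      ext x
      simp only [Finset.mem_sdiff, Finset.mem_Icc, Finset.mem_singleton]
      have : p ≤ i ∧ i ≤ q := hi
      omega
    rw [hset]
    have h5 : ∏ j ∈ Finset.Icc p q \ {i}, (X - C ((b j) : ℂ)) = (X - C ((b p) : ℂ))^(q - p) := by
      rw [Finset.prod_congr rfl (fun x hx => ?_), Finset.prod_const]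
      · congr 1
        rw [Finset.card_sdiff_of_subset (by simpa using Finset.mem_Icc.2 hi), hcard, Finset.card_singleton]
        omega
      · simp only [Finset.mem_sdiff, Finset.mem_Icc, Finset.mem_singleton] at hx
        rw [hconst x hx.1.1 hx.1.2]
    rw [h5, mul_comm]
    rfl
  have h4 : ∀ i ∈ Finset.Icc 1 k \ Finset.Icc p q,
      C ((Complex.normSq (z i) : ℂ)) * ∏ j ∈ Finset.Icc 1 k \ {i}, (X - C ((b j) : ℂ))
      = (X - C ((b p) : ℂ))^(q - p + 1) * (C ((Complex.normSq (z i) : ℂ)) *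
          ∏ j ∈ (Finset.Icc 1 k \ Finset.Icc p q) \ {i}, (X - C ((b j) : ℂ))) := by
    intro i hi
    simp only [Finset.mem_sdiff, Finset.mem_Icc] at hi
    rw [mul_comm ((X - C ((b p) : ℂ))^(q - p + 1)), mul_assoc]
    congr 1
    have hss : Finset.Icc p q ⊆ Finset.Icc 1 k \ {i} := by
      intro x hx
      simp only [Finset.mem_sdiff, Finset.mem_Icc, Finset.mem_singleton] at *
      omega
    rw [← Finset.prod_sdiff hss]
    have hset : (Finset.Icc 1 k \ {i}) \ Finset.Icc p q
        = (Finset.Icc 1 k \ Finset.Icc p q) \ {i} := by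
      ext x
      simp only [Finset.mem_sdiff, Finset.mem_Icc, Finset.mem_singleton]
      tauto
    rw [hset]
    have h5 : ∏ j ∈ Finset.Icc p q, (X - C ((b j) : ℂ)) = (X - C ((b p) : ℂ))^(q - p + 1) := by
      rw [Finset.prod_congr rfl (fun x hx => ?_), Finset.prod_const, hcard]
      simp only [Finset.mem_Icc] at hx
      rw [hconst x hx.1 hx.2]
    rw [h5, mul_comm]
  rw [Fpoly, hQfull, ← Finset.sum_sdiff hsub, Finset.sum_congr rfl h4, Finset.sum_congr rfl h3]
  rw [← Finset.sum_mul, ← Finset.mul_sum]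
  have hcs : ∑ i ∈ Finset.Icc p q, C ((Complex.normSq (z i) : ℂ))
      = C ((Sig z p q : ℝ) : ℂ) := by
    rw [← map_sum]
    congr 1
    rw [Sig]
    push_cast
    rfl
  rw [hcs, Gpoly]
  ring

end Poly
section Eval

variable {k : ℕ} {a b : ℕ → ℝ} {z : ℕ → ℂ} {p q : ℕ}

lemma Geval :
    (Gpoly k a b z p q).eval ((b p : ℂ))
      = - ((Sig z p q : ℝ) : ℂ) * ∏ j ∈ Finset.Icc 1 k \ Finset.Icc p q, (((b p) : ℂ) - ((b j) : ℂ)) := by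
  simp only [Gpoly, Qp, eval_sub, eval_mul, eval_pow, eval_prod, eval_C, eval_X, sub_self,
    zero_mul, mul_zero, eval_sum]
  ring

lemma P'eval :
    (Pp' k a b p q).eval ((b p : ℂ))
      = ∏ i ∈ Finset.Icc 1 (k+1) \ Finset.Icc (p+1) q, (((b p) : ℂ) - ((a i) : ℂ)) := by
  simp only [Pp', eval_prod, eval_sub, eval_C, eval_X]

lemma denom_ne (hab : ∀ i, 1 ≤ i → i ≤ k → b i ≤ a i ∧ a (i + 1) ≤ b i)
    (hI : IsMaxConstInterval k b p q) :
    ∏ j ∈ Finset.Icc 1 k \ Finset.Icc p q, (b p - b j) ≠ 0 := by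
  rw [Finset.prod_ne_zero_iff]
  intro j hj
  simp only [Finset.mem_sdiff, Finset.mem_Icc] at hj
  rcases Nat.lt_or_ge j p with h | h
  · have := interval_b_lt hab hI j hj.1.1 h
    intro hc; linarith
  · have hq : q < j := by
      rcases Nat.lt_or_ge q j with h' | h'
      · exact h'
      · exfalso; exact hj.2 ⟨h, h'⟩
    have := interval_b_gt hab hI j hq hj.1.2
    intro hc; linarith

lemma G_eq_P'_of_mem (hab : ∀ i, 1 ≤ i → i ≤ k → b i ≤ a i ∧ a (i + 1) ≤ b i)
    (hI : IsMaxConstInterval k b p q) (hz : Fpoly k a b z = Ppoly k a) :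
    Gpoly k a b z p q = Pp' k a b p q := by
  have h := hz
  rw [hFfac hI, hPfac hab hI] at h
  exact mul_left_cancel₀ (pow_ne_zero _ (X_sub_C_ne_zero _)) h

lemma sig_eq_of_mem (hab : ∀ i, 1 ≤ i → i ≤ k → b i ≤ a i ∧ a (i + 1) ≤ b i)
    (hI : IsMaxConstInterval k b p q) (hz : Fpoly k a b z = Ppoly k a) :
    Sig z p q = Cconst k a b p q := by
  have hG := G_eq_P'_of_mem hab hI hz
  have hev := congrArg (Polynomial.eval ((b p : ℂ))) hG
  rw [Geval, P'eval] at hev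
  have hreal : - (Sig z p q) * ∏ j ∈ Finset.Icc 1 k \ Finset.Icc p q, (b p - b j)
      = ∏ i ∈ Finset.Icc 1 (k+1) \ Finset.Icc (p+1) q, (b p - a i) := by
    have : ((- (Sig z p q) * ∏ j ∈ Finset.Icc 1 k \ Finset.Icc p q, (b p - b j) : ℝ) : ℂ)
        = ((∏ i ∈ Finset.Icc 1 (k+1) \ Finset.Icc (p+1) q, (b p - a i) : ℝ) : ℂ) := by
      push_cast
      convert hev using 2 <;> norm_cast
    exact_mod_cast this
  have hden := denom_ne hab hI
  rw [Cconst, eq_div_iff hden]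
  linarith [hreal]

lemma root_of_cond (hab : ∀ i, 1 ≤ i → i ≤ k → b i ≤ a i ∧ a (i + 1) ≤ b i)
    (hI : IsMaxConstInterval k b p q)
    (hcond : Sig z p q = Cconst k a b p q ∨
      (Sig z p q = 0 ∧ ∏ i ∈ Finset.Icc 1 (k+1) \ Finset.Icc (p+1) q, (b p - a i) = 0)) :
    (X - C ((b p) : ℂ)) ∣ (Gpoly k a b z p q - Pp' k a b p q) := by
  rw [dvd_iff_isRoot]
  unfold IsRoot
  rw [eval_sub, Geval, P'eval]
  have key : - (Sig z p q) * ∏ j ∈ Finset.Icc 1 k \ Finset.Icc p q, (b p - b j)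
      - ∏ i ∈ Finset.Icc 1 (k+1) \ Finset.Icc (p+1) q, (b p - a i) = 0 := by
    rcases hcond with h | ⟨h0, hP0⟩
    · have hden := denom_ne hab hI
      rw [h, Cconst]
      field_simp
      ring
    · rw [h0, hP0]; ring
  have h := congrArg (fun r : ℝ => (r : ℂ)) key
  push_cast at h
  linear_combination h

end Eval

section Global

variable {k : ℕ} {a b : ℕ → ℝ} {z : ℕ → ℂ}

lemma Qmonic : (∏ i ∈ Finset.Icc 1 k, (X - C ((b i):ℂ))).Monic :=
  monic_prod_of_monic _ _ fun i _ => monic_X_sub_C _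

lemma Qdeg : (∏ i ∈ Finset.Icc 1 k, (X - C ((b i):ℂ))).natDegree = k := by
  rw [Polynomial.natDegree_prod_of_monic _ _ fun i _ => monic_X_sub_C _]
  simp [natDegree_X_sub_C]

lemma Pmonic : (Ppoly k a).Monic :=
  monic_prod_of_monic _ _ fun i _ => monic_X_sub_C _

lemma Pdeg : (Ppoly k a).natDegree = k + 1 := by
  rw [Ppoly, Polynomial.natDegree_prod_of_monic _ _ fun i _ => monic_X_sub_C _]
  simp [natDegree_X_sub_C]

lemma degree_FsubP_lt (hk : 1 ≤ k) :
    (Fpoly k a b z - Ppoly k a).degree < (k : WithBot ℕ) := by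
  have hQm : (∏ i ∈ Finset.Icc 1 k, (X - C ((b i):ℂ))).Monic := Qmonic
  have hUd : ((X - C ((wv k a b : ℝ) : ℂ)) * ∏ i ∈ Finset.Icc 1 k, (X - C ((b i):ℂ))).natDegree
      = k + 1 := by
    rw [(monic_X_sub_C _).natDegree_mul hQm, natDegree_X_sub_C, Qdeg]
    omega
  have hUm : ((X - C ((wv k a b : ℝ) : ℂ)) * ∏ i ∈ Finset.Icc 1 k, (X - C ((b i):ℂ))).Monic :=
    (monic_X_sub_C _).mul hQm
  have hSd : (∑ i ∈ Finset.Icc 1 k, C ((Complex.normSq (z i) : ℂ)) *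
      ∏ j ∈ Finset.Icc 1 k \ {i}, (X - C ((b j) : ℂ))).natDegree ≤ k - 1 := by
    apply Polynomial.natDegree_sum_le_of_forall_le
    intro i hi
    have h1 : (∏ j ∈ Finset.Icc 1 k \ {i}, (X - C ((b j):ℂ))).natDegree ≤ k - 1 := by
      refine le_trans (Polynomial.natDegree_prod_le _ _) ?_
      rw [Finset.sum_congr rfl (fun j _ => natDegree_X_sub_C (R := ℂ) ((b j):ℂ))]
      rw [Finset.sum_const, smul_eq_mul, mul_one,
        Finset.card_sdiff_of_subset (by simpa using hi), Nat.card_Icc, Finset.card_singleton]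
      simp only [Finset.mem_Icc] at hi
      omega
    refine le_trans Polynomial.natDegree_mul_le ?_
    rw [natDegree_C]
    simpa using h1
  rw [Polynomial.degree_lt_iff_coeff_zero]
  intro m hm
  rw [Fpoly, coeff_sub, coeff_sub]
  have hScoeff : (∑ i ∈ Finset.Icc 1 k, C ((Complex.normSq (z i) : ℂ)) *
      ∏ j ∈ Finset.Icc 1 k \ {i}, (X - C ((b j) : ℂ))).coeff m = 0 :=
    Polynomial.coeff_eq_zero_of_natDegree_lt (lt_of_le_of_lt hSd (by omega))
  rw [hScoeff]
  by_cases hm1 : m = k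
  · rw [hm1]
    have hnc : ((X - C ((wv k a b : ℝ) : ℂ)) * ∏ i ∈ Finset.Icc 1 k, (X - C ((b i):ℂ))).nextCoeff
        = -((wv k a b : ℝ) : ℂ) + -∑ i ∈ Finset.Icc 1 k, ((b i : ℝ) : ℂ) := by
      rw [Polynomial.Monic.nextCoeff_mul (monic_X_sub_C _) hQm, nextCoeff_X_sub_C,
        Polynomial.prod_X_sub_C_nextCoeff]
    have hcU : ((X - C ((wv k a b : ℝ) : ℂ)) * ∏ i ∈ Finset.Icc 1 k, (X - C ((b i):ℂ))).coeff k
        = -((wv k a b : ℝ) : ℂ) + -∑ i ∈ Finset.Icc 1 k, ((b i : ℝ) : ℂ) := by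
      rw [← hnc, Polynomial.nextCoeff_of_natDegree_pos (by rw [hUd]; omega), hUd]
      norm_num
    have hncP : (Ppoly k a).nextCoeff = -∑ i ∈ Finset.Icc 1 (k+1), ((a i : ℝ) : ℂ) := by
      rw [Ppoly, Polynomial.prod_X_sub_C_nextCoeff]
    have hcP : (Ppoly k a).coeff k = -∑ i ∈ Finset.Icc 1 (k+1), ((a i : ℝ) : ℂ) := by
      rw [← hncP, Polynomial.nextCoeff_of_natDegree_pos (by rw [Pdeg]; omega), Pdeg]
      norm_num
    rw [hcU, hcP, wv]
    push_cast
    ring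
  by_cases hm2 : m = k + 1
  · rw [hm2]
    have hcU : ((X - C ((wv k a b : ℝ) : ℂ)) * ∏ i ∈ Finset.Icc 1 k, (X - C ((b i):ℂ))).coeff (k+1)
        = 1 := by
      have := hUm.coeff_natDegree
      rwa [hUd] at this
    have hcP : (Ppoly k a).coeff (k+1) = 1 := by
      have := (Pmonic (k := k) (a := a)).coeff_natDegree
      rwa [Pdeg] at this
    rw [hcU, hcP]
    ring
  · have hcU : ((X - C ((wv k a b : ℝ) : ℂ)) * ∏ i ∈ Finset.Icc 1 k, (X - C ((b i):ℂ))).coeff m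
        = 0 := Polynomial.coeff_eq_zero_of_natDegree_lt (by rw [hUd]; omega)
    have hcP : (Ppoly k a).coeff m = 0 :=
      Polynomial.coeff_eq_zero_of_natDegree_lt (by rw [Pdeg]; omega)
    rw [hcU, hcP]
    ring

end Global

section Backward

variable {k : ℕ} {a b : ℕ → ℝ} {z : ℕ → ℂ}

lemma Qfact (hk : 1 ≤ k) :
    ∏ i ∈ Finset.Icc 1 k, (X - C ((b i):ℂ))
      = ∏ p ∈ Starts k b, (X - C ((b p):ℂ))^(iend k b p - p + 1) := by
  classical
  have hmaps : ∀ i ∈ Finset.Icc 1 k, stt k b i ∈ Starts k b := by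
    intro i hi
    simp only [Finset.mem_Icc] at hi
    exact (stt_mem hk hi.1 hi.2).1
  rw [← Finset.prod_fiberwise_of_maps_to hmaps (fun i => (X - C ((b i):ℂ)))]
  refine Finset.prod_congr rfl fun p hp => ?_
  have hfiber : Finset.filter (fun i => stt k b i = p) (Finset.Icc 1 k)
      = Finset.Icc p (iend k b p) := by
    ext i
    simp only [Finset.mem_filter, Finset.mem_Icc]
    constructor
    · rintro ⟨⟨h1, h2⟩, h3⟩
      exact (stt_fiber hk hp h1 h2).1 h3
    · rintro ⟨h1, h2⟩
      have hp1 : 1 ≤ p := (mem_starts_iff.1 hp).1.1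
      have hik : i ≤ k := le_trans h2 (iend_le p)
      exact ⟨⟨by omega, hik⟩, (stt_fiber hk hp (by omega) hik).2 ⟨h1, h2⟩⟩
  rw [hfiber]
  rw [Finset.prod_congr rfl (fun i hi => ?_), Finset.prod_const, Nat.card_Icc]
  · congr 1
    have := iend_ge hp
    omega
  · simp only [Finset.mem_Icc] at hi
    rw [iend_const hp i hi.1 hi.2]

lemma starts_strict (hab : ∀ i, 1 ≤ i → i ≤ k → b i ≤ a i ∧ a (i + 1) ≤ b i)
    {p p' : ℕ} (hp : p ∈ Starts k b) (hp' : p' ∈ Starts k b) (h : p < p') : b p' < b p := by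
  obtain ⟨⟨hp1, hpk⟩, _⟩ := mem_starts_iff.1 hp
  obtain ⟨⟨hp'1, hp'k⟩, hst'⟩ := mem_starts_iff.1 hp'
  have hp'2 : 2 ≤ p' := by omega
  have hne : b (p'-1) ≠ b p' := by
    rcases hst' with h' | h'
    · omega
    · exact h'
  have h1 : b p' ≤ b (p'-1) := bmono hab p' hp'k (p'-1) (by omega) (by omega)
  have h2 : b (p'-1) ≤ b p := bmono hab (p'-1) (by omega) p hp1 (by omega)
  have := lt_of_le_of_ne h1 (fun h => hne h.symm)
  linarith

lemma num_zero_of_degenerate (hI : IsMaxConstInterval k b p q)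
    (hdeg : a p = b p ∨ b q = a (q + 1)) :
    ∏ i ∈ Finset.Icc 1 (k+1) \ Finset.Icc (p+1) q, (b p - a i) = 0 := by
  obtain ⟨hp1, hpq, hqk, hconst, _, _⟩ := hI
  rcases hdeg with h | h
  · refine Finset.prod_eq_zero (i := p) ?_ (by rw [h]; ring)
    simp only [Finset.mem_sdiff, Finset.mem_Icc]
    exact ⟨⟨hp1, by omega⟩, by omega⟩
  · refine Finset.prod_eq_zero (i := q + 1) ?_ ?_
    · simp only [Finset.mem_sdiff, Finset.mem_Icc]
      exact ⟨⟨by omega, by omega⟩, by omega⟩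
    · have : b q = b p := hconst q hpq (le_refl _)
      rw [← h, this]; ring

lemma backward (hk : 1 ≤ k) (hab : ∀ i, 1 ≤ i → i ≤ k → b i ≤ a i ∧ a (i + 1) ≤ b i)
    (hcond : ∀ p q, IsMaxConstInterval k b p q →
      Sig z p q = Cconst k a b p q ∨
        ((a p = b p ∨ b q = a (q + 1)) ∧ ∀ i, p ≤ i → i ≤ q → z i = 0)) :
    Fpoly k a b z = Ppoly k a := by
  classical
  have key : ∀ p ∈ Starts k b,
      (X - C ((b p):ℂ))^(iend k b p - p + 1) ∣ (Fpoly k a b z - Ppoly k a) := by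
    intro p hp
    have hI := starts_isMaxConstInterval hk hp
    set q := iend k b p with hq
    have hroot : (X - C ((b p):ℂ)) ∣ (Gpoly k a b z p q - Pp' k a b p q) := by
      apply root_of_cond hab hI
      rcases hcond p q hI with h | ⟨hdeg, hzero⟩
      · exact Or.inl h
      · refine Or.inr ⟨?_, num_zero_of_degenerate hI hdeg⟩
        rw [Sig]
        apply Finset.sum_eq_zero
        intro i hi
        simp only [Finset.mem_Icc] at hi
        rw [hzero i hi.1 hi.2]
        simp
    have hFP : Fpoly k a b z - Ppoly k a
        = (X - C ((b p):ℂ))^(q - p) * (Gpoly k a b z p q - Pp' k a b p q) := by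
      rw [hFfac hI, hPfac hab hI]
      ring
    rw [hFP]
    have hpow : (X - C ((b p):ℂ))^(q - p + 1)
        = (X - C ((b p):ℂ))^(q - p) * (X - C ((b p):ℂ)) := by
      rw [pow_succ]
    rw [hpow]
    exact mul_dvd_mul_left _ hroot
  have hQdvd : (∏ i ∈ Finset.Icc 1 k, (X - C ((b i):ℂ))) ∣ (Fpoly k a b z - Ppoly k a) := by
    rw [Qfact hk]
    apply Finset.prod_dvd_of_coprime
    · intro p hp p' hp' hne
      apply IsCoprime.pow
      apply Polynomial.isCoprime_X_sub_C_of_isUnit_sub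
      have hbne : b p ≠ b p' := by
        rcases Nat.lt_or_ge p p' with h | h
        · exact ne_of_gt (starts_strict hab hp hp' h)
        · have : p' < p := by omega
          exact (ne_of_gt (starts_strict hab hp' hp this)).symm
      rw [isUnit_iff_ne_zero, sub_ne_zero]
      exact_mod_cast fun h => hbne (by exact_mod_cast h)
    · exact key
  have hzero : Fpoly k a b z - Ppoly k a = 0 := by
    apply Polynomial.eq_zero_of_dvd_of_degree_lt hQdvd
    have hdQ : (∏ i ∈ Finset.Icc 1 k, (X - C ((b i):ℂ))).degree = (k : WithBot ℕ) := by
      rw [Polynomial.degree_eq_natDegree Qmonic.ne_zero, Qdeg]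
    rw [hdQ]
    exact degree_FsubP_lt hk
  exact sub_eq_zero.mp hzero

end Backward

section Cpos

variable {k : ℕ} {a b : ℕ → ℝ} {p q : ℕ}

lemma prod_neg_aux (s : Finset ℕ) (f : ℕ → ℝ) :
    ∏ i ∈ s, (-f i) = (-1)^s.card * ∏ i ∈ s, f i := by
  rw [Finset.prod_congr rfl (fun i _ => by rw [neg_eq_neg_one_mul (f i)] : ∀ i ∈ s, -f i = (-1) * f i),
    Finset.prod_mul_distrib, Finset.prod_const]

lemma Cconst_zero (hI : IsMaxConstInterval k b p q) (hdeg : a p = b p ∨ b q = a (q + 1)) :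
    Cconst k a b p q = 0 := by
  rw [Cconst, num_zero_of_degenerate hI hdeg, neg_zero, zero_div]

lemma Cconst_pos (hab : ∀ i, 1 ≤ i → i ≤ k → b i ≤ a i ∧ a (i + 1) ≤ b i)
    (hI : IsMaxConstInterval k b p q) (hap : b p < a p) (haq : a (q + 1) < b q) :
    0 < Cconst k a b p q := by
  obtain ⟨hp1, hpq, hqk, hconst, hml, hmr⟩ := hI
  have hI' : IsMaxConstInterval k b p q := ⟨hp1, hpq, hqk, hconst, hml, hmr⟩
  have hbq : b q = b p := hconst q hpq (le_refl _)
  -- numerator split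
  have hnumset : Finset.Icc 1 (k+1) \ Finset.Icc (p+1) q
      = Finset.Icc 1 p ∪ Finset.Icc (q+1) (k+1) := by
    ext x
    simp only [Finset.mem_sdiff, Finset.mem_Icc, Finset.mem_union]
    omega
  have hdisj : Disjoint (Finset.Icc 1 p) (Finset.Icc (q+1) (k+1)) := by
    rw [Finset.disjoint_left]
    intro x hx hx'
    simp only [Finset.mem_Icc] at *
    omega
  have hdenset : Finset.Icc 1 k \ Finset.Icc p q
      = Finset.Icc 1 (p-1) ∪ Finset.Icc (q+1) k := by
    ext x
    simp only [Finset.mem_sdiff, Finset.mem_Icc, Finset.mem_union]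
    omega
  have hdisj' : Disjoint (Finset.Icc 1 (p-1)) (Finset.Icc (q+1) k) := by
    rw [Finset.disjoint_left]
    intro x hx hx'
    simp only [Finset.mem_Icc] at *
    omega
  have hN1 : ∏ i ∈ Finset.Icc 1 p, (b p - a i)
      = (-1)^p * ∏ i ∈ Finset.Icc 1 p, (a i - b p) := by
    rw [Finset.prod_congr rfl (fun i _ => by ring : ∀ i ∈ Finset.Icc 1 p, b p - a i = -(a i - b p)),
      prod_neg_aux, Nat.card_Icc]
    congr 2
  have hD1 : ∏ j ∈ Finset.Icc 1 (p-1), (b p - b j)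
      = (-1)^(p-1) * ∏ j ∈ Finset.Icc 1 (p-1), (b j - b p) := by
    rw [Finset.prod_congr rfl
        (fun j _ => by ring : ∀ j ∈ Finset.Icc 1 (p-1), b p - b j = -(b j - b p)),
      prod_neg_aux, Nat.card_Icc]
    congr 2
  have hN1pos : 0 < ∏ i ∈ Finset.Icc 1 p, (a i - b p) := by
    apply Finset.prod_pos
    intro i hi
    simp only [Finset.mem_Icc] at hi
    have : a p ≤ a i := amono hab p (by omega) i hi.1 hi.2
    linarith
  have hN2pos : 0 < ∏ i ∈ Finset.Icc (q+1) (k+1), (b p - a i) := by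
    apply Finset.prod_pos
    intro i hi
    simp only [Finset.mem_Icc] at hi
    have : a i ≤ a (q+1) := amono hab i hi.2 (q+1) (by omega) hi.1
    linarith
  have hD1pos : 0 < ∏ j ∈ Finset.Icc 1 (p-1), (b j - b p) := by
    apply Finset.prod_pos
    intro j hj
    simp only [Finset.mem_Icc] at hj
    have := interval_b_lt hab hI' j hj.1 (by omega)
    linarith
  have hD2pos : 0 < ∏ j ∈ Finset.Icc (q+1) k, (b p - b j) := by
    apply Finset.prod_pos
    intro j hj
    simp only [Finset.mem_Icc] at hj
    have := interval_b_gt hab hI' j (by omega) hj.2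
    linarith
  rw [Cconst, hnumset, hdenset, Finset.prod_union hdisj, Finset.prod_union hdisj', hN1, hD1]
  set t : ℝ := (-1)^(p-1) with ht
  have hpow : (-1:ℝ)^p = t * (-1) := by
    rw [ht, ← pow_succ]
    congr 1
    omega
  have htne : t ≠ 0 := pow_ne_zero _ (by norm_num)
  rw [hpow]
  have e1 : -((t * -1 * ∏ i ∈ Finset.Icc 1 p, (a i - b p)) * ∏ i ∈ Finset.Icc (q+1) (k+1), (b p - a i))
      = t * ((∏ i ∈ Finset.Icc 1 p, (a i - b p)) * ∏ i ∈ Finset.Icc (q+1) (k+1), (b p - a i)) := by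
    ring
  have e2 : (t * ∏ j ∈ Finset.Icc 1 (p-1), (b j - b p)) * ∏ j ∈ Finset.Icc (q+1) k, (b p - b j)
      = t * ((∏ j ∈ Finset.Icc 1 (p-1), (b j - b p)) * ∏ j ∈ Finset.Icc (q+1) k, (b p - b j)) := by
    ring
  rw [e1, e2, mul_div_mul_left _ _ htne]
  exact div_pos (mul_pos hN1pos hN2pos) (mul_pos hD1pos hD2pos)

end Cpos

section Final

variable {k : ℕ} {a b : ℕ → ℝ} {p q : ℕ}

lemma Cconst_nonneg (hab : ∀ i, 1 ≤ i → i ≤ k → b i ≤ a i ∧ a (i + 1) ≤ b i)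
    (hI : IsMaxConstInterval k b p q) : 0 ≤ Cconst k a b p q := by
  have hp1 : 1 ≤ p := hI.1
  have hpq : p ≤ q := hI.2.1
  have hqk : q ≤ k := hI.2.2.1
  by_cases h1 : b p < a p
  · by_cases h2 : a (q+1) < b q
    · exact (Cconst_pos hab hI h1 h2).le
    · have : b q = a (q+1) :=
        le_antisymm (le_of_not_gt h2) (hab q (by omega) hqk).2
      rw [Cconst_zero hI (Or.inr this)]
  · have : a p = b p := le_antisymm (le_of_not_gt h1) (hab p hp1 (by omega)).1
    rw [Cconst_zero hI (Or.inl this)]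

noncomputable def z0 (k : ℕ) (a b : ℕ → ℝ) : ℕ → ℂ := fun i =>
  if i ∈ Starts k b then ((Real.sqrt (Cconst k a b i (iend k b i)) : ℝ) : ℂ) else 0

lemma sig_z0 (hab : ∀ i, 1 ≤ i → i ≤ k → b i ≤ a i ∧ a (i + 1) ≤ b i)
    (hI : IsMaxConstInterval k b p q) :
    Sig (z0 k a b) p q = Cconst k a b p q := by
  have hq : q = iend k b p := interval_end_eq hI
  have hp : p ∈ Starts k b := interval_start_mem hI
  rw [Sig, Finset.sum_eq_single_of_mem p (Finset.mem_Icc.2 ⟨le_refl _, hI.2.1⟩)]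
  · rw [z0]
    simp only [if_pos hp, ← hq]
    rw [Complex.normSq_ofReal, Real.mul_self_sqrt (Cconst_nonneg hab hI)]
  · intro i hi hne
    simp only [Finset.mem_Icc] at hi
    have hnotin : i ∉ Starts k b := by
      intro hmem
      obtain ⟨⟨hi1, hik⟩, hst⟩ := mem_starts_iff.1 hmem
      have hip : p < i := lt_of_le_of_ne hi.1 (fun h => hne h.symm)
      have hp1 : 1 ≤ p := hI.1
      have hne' : b (i-1) ≠ b i := by
        rcases hst with h | h
        · omega
        · exact h
      apply hne'
      have e1 : b (i-1) = b p := hI.2.2.2.1 (i-1) (by omega) (by omega)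
      have e2 : b i = b p := hI.2.2.2.1 i (by omega) hi.2
      rw [e1, e2]
    rw [z0]
    simp only [if_neg hnotin]
    simp

lemma z0_mem (hk : 1 ≤ k) (hab : ∀ i, 1 ≤ i → i ≤ k → b i ≤ a i ∧ a (i + 1) ≤ b i) :
    Fpoly k a b (z0 k a b) = Ppoly k a :=
  backward hk hab (fun _ _ hI => Or.inl (sig_z0 hab hI))

end Final


/-- There exist unique positive constants `C p q`, one for each maximal
constant interval `[p, q]` of `b` with `a_p > b_p` and `b_q > a_{q+1}`, such that
`z ∈ Ã_{k+1}(a,b)` iff for every maximal constant interval `[p, q]` of `b`, either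
`a_p > b_p` and `b_q > a_{q+1}` and `Σ_{i=p}^{q} |z_i|² = C p q`, or else
(`a_p = b_p` or `b_q = a_{q+1}`) and `z_i = 0` for all `p ≤ i ≤ q`. -/
theorem statement10 (k : ℕ) (hk : 1 ≤ k) (a b : ℕ → ℝ)
    (hab : ∀ i, 1 ≤ i → i ≤ k → b i ≤ a i ∧ a (i + 1) ≤ b i) :
    ∃ C : ℕ → ℕ → ℝ,
      ((∀ p q, IsMaxConstInterval k b p q → b p < a p → a (q + 1) < b q → 0 < C p q) ∧
        (∀ z : ℕ → ℂ, z ∈ Atilde k a b ↔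
          (∀ p q, IsMaxConstInterval k b p q →
            ((b p < a p ∧ a (q + 1) < b q) ∧
              (∑ i ∈ Finset.Icc p q, Complex.normSq (z i)) = C p q) ∨
            ((a p = b p ∨ b q = a (q + 1)) ∧ ∀ i, p ≤ i → i ≤ q → z i = 0)))) ∧
      ∀ C' : ℕ → ℕ → ℝ,
        ((∀ p q, IsMaxConstInterval k b p q → b p < a p → a (q + 1) < b q → 0 < C' p q) ∧
          (∀ z : ℕ → ℂ, z ∈ Atilde k a b ↔
            (∀ p q, IsMaxConstInterval k b p q →
              ((b p < a p ∧ a (q + 1) < b q) ∧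
                (∑ i ∈ Finset.Icc p q, Complex.normSq (z i)) = C' p q) ∨
              ((a p = b p ∨ b q = a (q + 1)) ∧ ∀ i, p ≤ i → i ≤ q → z i = 0)))) →
        ∀ p q, IsMaxConstInterval k b p q → b p < a p → a (q + 1) < b q →
          C' p q = C p q := by
  have hiff : ∀ z : ℕ → ℂ, z ∈ Atilde k a b ↔
      (∀ p q, IsMaxConstInterval k b p q →
        ((b p < a p ∧ a (q + 1) < b q) ∧
          (∑ i ∈ Finset.Icc p q, Complex.normSq (z i)) = Cconst k a b p q) ∨
        ((a p = b p ∨ b q = a (q + 1)) ∧ ∀ i, p ≤ i → i ≤ q → z i = 0)) := by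
    intro z
    rw [mem_atilde_iff]
    constructor
    · intro hz p q hI
      have hs : Sig z p q = Cconst k a b p q := sig_eq_of_mem hab hI hz
      by_cases h1 : b p < a p
      · by_cases h2 : a (q+1) < b q
        · exact Or.inl ⟨⟨h1, h2⟩, hs⟩
        · have hdeg : a p = b p ∨ b q = a (q + 1) :=
            Or.inr (le_antisymm (le_of_not_gt h2) (hab q (le_trans hI.1 hI.2.1) hI.2.2.1).2)
          refine Or.inr ⟨hdeg, ?_⟩
          have hz0 : Sig z p q = 0 := by rw [hs, Cconst_zero hI hdeg]
          intro i hip hiq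
          rw [Sig] at hz0
          have := (Finset.sum_eq_zero_iff_of_nonneg
            (fun i _ => Complex.normSq_nonneg (z i))).1 hz0 i (Finset.mem_Icc.2 ⟨hip, hiq⟩)
          exact Complex.normSq_eq_zero.1 this
      · have hdeg : a p = b p ∨ b q = a (q + 1) :=
          Or.inl (le_antisymm (le_of_not_gt h1)
            (hab p hI.1 (le_trans hI.2.1 hI.2.2.1)).1)
        refine Or.inr ⟨hdeg, ?_⟩
        have hs0 : Sig z p q = 0 := by
          rw [sig_eq_of_mem hab hI hz, Cconst_zero hI hdeg]
        intro i hip hiq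
        rw [Sig] at hs0
        have := (Finset.sum_eq_zero_iff_of_nonneg
          (fun i _ => Complex.normSq_nonneg (z i))).1 hs0 i (Finset.mem_Icc.2 ⟨hip, hiq⟩)
        exact Complex.normSq_eq_zero.1 this
    · intro hcond
      apply backward hk hab
      intro p q hI
      rcases hcond p q hI with ⟨_, hsum⟩ | ⟨hdeg, hzero⟩
      · exact Or.inl hsum
      · exact Or.inr ⟨hdeg, hzero⟩
  refine ⟨Cconst k a b, ⟨fun p q hI h1 h2 => Cconst_pos hab hI h1 h2, hiff⟩, ?_⟩
  rintro C' ⟨_, hiff'⟩ p q hI hap haq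
  have hz0mem : z0 k a b ∈ Atilde k a b := (mem_atilde_iff k a b _).2 (z0_mem hk hab)
  have h1 := (hiff' _).1 hz0mem p q hI
  have h2 := (hiff _).1 hz0mem p q hI
  rcases h1 with ⟨_, hsum'⟩ | ⟨hdeg, _⟩
  · rcases h2 with ⟨_, hsum⟩ | ⟨hdeg, _⟩
    · rw [← hsum', ← hsum]
    · rcases hdeg with h | h
      · linarith
      · linarith
  · rcases hdeg with h | h
    · linarith
    · linarith
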